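/- Let n ≥ 1 and D ≥ 1 be integers. Then there is a constant C depending only on n and D such that for every prime p, every nonzero polynomial f ∈ 𝔽_p[x₁,…,xₙ] of total degree at most D, and every real T ≥ 1, the number of integer vectors x ∈ ℤⁿ with 0 < x_i ≤ T for all i and f(x mod p) = 0 is at most C·( Tⁿ·p^{−1} + T^{n−1} ). -/

import Mathlib

open MvPolynomial Finset

theorem sz {F : Type*} [Field F] [DecidableEq F] :
    ∀ (n : ℕ) (S : Finset F) (d : ℕ) (f : MvPolynomial (Fin n) F), f ≠ 0 → f.totalDegree ≤ d →
    ((Fintype.piFinset fun _ : Fin n => S).filter fun x => eval x f = 0).card * S.card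
      ≤ d * S.card ^ n
  | 0, S, d, f, hf, hd => by
    have he : ((Fintype.piFinset fun _ : Fin 0 => S).filter fun x => eval x f = 0) = ∅ := by
      rw [Finset.eq_empty_iff_forall_notMem]
      intro x hx
      rw [Finset.mem_filter] at hx
      apply hf
      rw [eq_C_of_isEmpty f] at hx ⊢
      rw [eval_C] at hx
      rw [hx.2, map_zero]
    rw [he]; simp
  | (n+1), S, d, f, hf, hd => by
    set q := finSuccEquiv F n f with hq
    have hq0 : q ≠ 0 := by
      simpa [hq] using (map_ne_zero_iff _ (finSuccEquiv F n).injective).mpr hf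
    set k := q.natDegree with hkdef
    have hk : k ≤ d := by
      rw [hkdef, hq, natDegree_finSuccEquiv]
      exact le_trans (degreeOf_le_totalDegree f 0) hd
    set g := q.leadingCoeff with hgdef
    have hg0 : g ≠ 0 := Polynomial.leadingCoeff_ne_zero.mpr hq0
    have hgd : g.totalDegree ≤ d - k := by
      have h1 := totalDegree_coeff_finSuccEquiv_add_le f k (by
        rw [← Polynomial.leadingCoeff]; exact hg0)
      have : g.totalDegree + k ≤ d := le_trans h1 hd
      omega
    set Z := ((Fintype.piFinset fun _ : Fin (n+1) => S).filter fun x => eval x f = 0) with hZ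
    set bad := ((Fintype.piFinset fun _ : Fin n => S).filter fun y => eval y g = 0) with hbad
    set B := bad ×ˢ S with hB
    set G := (Fintype.piFinset fun _ : Fin n => S).biUnion (fun y =>
      ({y} : Finset (Fin n → F)) ×ˢ (S.filter fun z =>
        eval y g ≠ 0 ∧ Polynomial.eval z (q.map (eval y)) = 0)) with hG
    have hcard : Z.card ≤ B.card + G.card := by
      have hinj : Set.InjOn (fun x : Fin (n+1) → F => (Fin.tail x, x 0)) ↑Z := by
        intro x hx y hy hxy
        have h1 : Fin.tail x = Fin.tail y := congrArg Prod.fst hxy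
        have h2 : x 0 = y 0 := congrArg Prod.snd hxy
        funext i
        refine Fin.cases ?_ ?_ i
        · exact h2
        · intro j; exact congrFun h1 j
      calc Z.card = (Z.image (fun x => (Fin.tail x, x 0))).card :=
            (Finset.card_image_of_injOn hinj).symm
        _ ≤ (B ∪ G).card := by
            apply Finset.card_le_card
            intro yz hyz
            rw [Finset.mem_image] at hyz
            obtain ⟨x, hx, rfl⟩ := hyz
            rw [hZ, Finset.mem_filter, Fintype.mem_piFinset] at hx
            have hy : Fin.tail x ∈ Fintype.piFinset fun _ : Fin n => S := by
              rw [Fintype.mem_piFinset]; intro i; exact hx.1 _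
            have hz : x 0 ∈ S := hx.1 0
            have hev : Polynomial.eval (x 0) (q.map (eval (Fin.tail x))) = 0 := by
              rw [← eval_eq_eval_mv_eval', Fin.cons_self_tail]
              exact hx.2
            by_cases hgy : eval (Fin.tail x) g = 0
            · apply Finset.mem_union_left
              rw [hB, Finset.mem_product]
              exact ⟨Finset.mem_filter.mpr ⟨hy, hgy⟩, hz⟩
            · apply Finset.mem_union_right
              rw [hG]
              apply Finset.mem_biUnion.mpr
              exact ⟨Fin.tail x, hy, by
                rw [Finset.mem_product]
                exact ⟨Finset.mem_singleton_self _,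
                  Finset.mem_filter.mpr ⟨hz, hgy, hev⟩⟩⟩
        _ ≤ B.card + G.card := Finset.card_union_le _ _
    have hGcard : G.card ≤ S.card ^ n * k := by
      calc G.card ≤ ∑ y ∈ Fintype.piFinset fun _ : Fin n => S,
          (({y} : Finset (Fin n → F)) ×ˢ (S.filter fun z =>
            eval y g ≠ 0 ∧ Polynomial.eval z (q.map (eval y)) = 0)).card :=
            Finset.card_biUnion_le
        _ ≤ ∑ y ∈ Fintype.piFinset fun _ : Fin n => S, k := by
            apply Finset.sum_le_sum
            intro y _
            rw [Finset.card_product, Finset.card_singleton, one_mul]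
            by_cases hgy : eval y g = 0
            · have : (S.filter fun z =>
                  eval y g ≠ 0 ∧ Polynomial.eval z (q.map (eval y)) = 0) = ∅ := by
                rw [Finset.eq_empty_iff_forall_notMem]
                intro z hz
                exact (Finset.mem_filter.mp hz).2.1 hgy
              simp [this]
            · have hP0 : q.map (eval y) ≠ 0 := by
                intro h
                apply hgy
                have := Polynomial.coeff_map (eval y) k (p := q)
                rw [h, Polynomial.coeff_zero] at this
                exact this.symm
              calc (S.filter fun z =>
                  eval y g ≠ 0 ∧ Polynomial.eval z (q.map (eval y)) = 0).card
                  ≤ (q.map (eval y)).roots.toFinset.card := by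
                    apply Finset.card_le_card
                    intro z hz
                    rw [Multiset.mem_toFinset, Polynomial.mem_roots hP0]
                    exact (Finset.mem_filter.mp hz).2.2
                _ ≤ Multiset.card (q.map (eval y)).roots :=
                    Multiset.toFinset_card_le _
                _ ≤ (q.map (eval y)).natDegree := Polynomial.card_roots' _
                _ ≤ k := Polynomial.natDegree_map_le
        _ = S.card ^ n * k := by
            rw [Finset.sum_const, smul_eq_mul, Fintype.card_piFinset]
            simp [Finset.prod_const]
    have hBcard : bad.card * S.card ≤ (d - k) * S.card ^ n :=
      sz n S (d - k) g hg0 hgd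
    calc Z.card * S.card ≤ (B.card + G.card) * S.card :=
          Nat.mul_le_mul_right _ hcard
      _ = bad.card * S.card * S.card + G.card * S.card := by
          rw [hB, Finset.card_product]; ring
      _ ≤ (d - k) * S.card ^ n * S.card + (S.card ^ n * k) * S.card := by
          exact Nat.add_le_add (Nat.mul_le_mul_right _ hBcard) (Nat.mul_le_mul_right _ hGcard)
      _ = ((d - k) + k) * S.card ^ (n+1) := by ring
      _ = d * S.card ^ (n+1) := by rw [Nat.sub_add_cancel hk]

theorem sz' {F : Type*} [Field F] [DecidableEq F]
    (n : ℕ) (S : Finset F) (d : ℕ) (f : MvPolynomial (Fin n) F) (hf : f ≠ 0)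
    (hd : f.totalDegree ≤ d) :
    ((Fintype.piFinset fun _ : Fin n => S).filter fun x => eval x f = 0).card * S.card
      ≤ d * S.card ^ n := sz n S d f hf hd

theorem stmt13 (n D : ℕ) (hn : 1 ≤ n) (hD : 1 ≤ D) :
    ∃ C : ℝ, ∀ (p : ℕ), p.Prime →
      ∀ (f : MvPolynomial (Fin n) (ZMod p)), f ≠ 0 → f.totalDegree ≤ D →
      ∀ T : ℝ, 1 ≤ T →
      (Set.ncard {x : Fin n → ℤ |
          (∀ i, 0 < x i ∧ ((x i : ℝ)) ≤ T) ∧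
          MvPolynomial.eval (fun i => ((x i : ZMod p))) f = 0} : ℝ) ≤
        C * (T ^ n * (p : ℝ)⁻¹ + T ^ (n - 1)) := by
  classical
  obtain ⟨m, rfl⟩ : ∃ m, n = m + 1 := ⟨n - 1, by omega⟩
  simp only [Nat.add_sub_cancel]
  refine ⟨(D : ℝ) * 2 ^ (m + 1), ?_⟩
  intro p hp f hf hdeg T hT
  haveI : Fact p.Prime := ⟨hp⟩
  have hp0 : (0 : ℝ) < p := by exact_mod_cast hp.pos
  have hT0 : (0 : ℝ) < T := lt_of_lt_of_le one_pos hT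
  have hC0 : (0:ℝ) ≤ (D : ℝ) * 2 ^ (m + 1) := by positivity
  set N : ℤ := ⌊T⌋ with hNdef
  have hN1 : 1 ≤ N := Int.le_floor.mpr (by exact_mod_cast hT)
  have hNT : (N : ℝ) ≤ T := Int.floor_le T
  set box : Finset ℤ := Finset.Icc 1 N with hboxdef
  set A : Finset (Fin (m+1) → ℤ) := (Fintype.piFinset fun _ : Fin (m+1) => box).filter
      (fun x => eval (fun i => ((x i : ZMod p))) f = 0) with hAdef
  have hset : {x : Fin (m+1) → ℤ |
      (∀ i, 0 < x i ∧ ((x i : ℝ)) ≤ T) ∧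
      MvPolynomial.eval (fun i => ((x i : ZMod p))) f = 0} = ↑A := by
    ext x
    simp only [Set.mem_setOf_eq, hAdef, Finset.coe_filter, Fintype.mem_piFinset, hboxdef,
      Finset.mem_Icc]
    constructor
    · rintro ⟨h1, h2⟩
      exact ⟨fun i => ⟨by have := (h1 i).1; omega, Int.le_floor.mpr (h1 i).2⟩, h2⟩
    · rintro ⟨h1, h2⟩
      exact ⟨fun i => ⟨by have := (h1 i).1; omega, Int.le_floor.mp (h1 i).2⟩, h2⟩
  rw [hset, Set.ncard_coe_finset]
  set φ : (Fin (m+1) → ℤ) → (Fin (m+1) → ZMod p) := fun x i => ((x i : ZMod p)) with hφ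
  have hmemA : ∀ x ∈ A, eval (φ x) f = 0 := by
    intro x hx
    exact (Finset.mem_filter.mp hx).2
  have hboxA : ∀ x ∈ A, ∀ i, 1 ≤ x i ∧ x i ≤ N := by
    intro x hx i
    have := Fintype.mem_piFinset.mp (Finset.mem_filter.mp hx).1 i
    rwa [hboxdef, Finset.mem_Icc] at this
  by_cases hcase : (p : ℝ) ≤ T
  · -- p small: fiber counting over the full grid
    set M : ℤ := (N - 1) / p + 1 with hMdef
    have hpz : (0 : ℤ) < (p : ℤ) := by exact_mod_cast hp.pos
    have hM0 : 0 ≤ M := by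
      have : 0 ≤ (N - 1) / (p : ℤ) := Int.ediv_nonneg (by omega) (by omega)
      omega
    have hfiber : ∀ r : ZMod p,
        (box.filter (fun a : ℤ => ((a : ZMod p) = r))).card ≤ M.toNat := by
      intro r
      have hle : (box.filter (fun a : ℤ => ((a : ZMod p) = r))).card ≤
          (Finset.Icc (0 : ℤ) ((N - 1) / p)).card := by
        refine Finset.card_le_card_of_injOn (fun a : ℤ => (a - 1) / p) ?_ ?_
        · intro a ha
          rw [Finset.mem_coe, Finset.mem_filter, hboxdef, Finset.mem_Icc] at ha
          rw [Finset.mem_coe, Finset.mem_Icc]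
          constructor
          · exact Int.ediv_nonneg (by omega) (by omega)
          · exact Int.ediv_le_ediv hpz (by omega)
        · intro a ha b hb hab
          rw [Finset.mem_coe, Finset.mem_filter, hboxdef, Finset.mem_Icc] at ha hb
          have hdvd : (p : ℤ) ∣ b - a := by
            have := (ZMod.intCast_eq_intCast_iff _ _ _).mp (ha.2.trans hb.2.symm)
            exact Int.ModEq.dvd this
          have e1 := Int.mul_ediv_add_emod (a - 1) p
          have e2 := Int.mul_ediv_add_emod (b - 1) p
          have m1 : 0 ≤ (a - 1) % p := Int.emod_nonneg _ (by omega)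
          have m2 : 0 ≤ (b - 1) % p := Int.emod_nonneg _ (by omega)
          have l1 : (a - 1) % p < p := Int.emod_lt_of_pos _ hpz
          have l2 : (b - 1) % p < p := Int.emod_lt_of_pos _ hpz
          have : b - a = 0 := by
            apply Int.eq_zero_of_abs_lt_dvd hdvd
            have hab' : (a - 1) / (p:ℤ) = (b - 1) / (p:ℤ) := hab
            have habm : (p:ℤ) * ((a - 1) / (p:ℤ)) = (p:ℤ) * ((b - 1) / (p:ℤ)) := by
              rw [hab']
            rw [abs_lt]
            omega
          omega
      have : (Finset.Icc (0 : ℤ) ((N - 1) / p)).card = M.toNat := by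
        rw [Int.card_Icc, sub_zero]
      omega
    set Zfull : Finset (Fin (m+1) → ZMod p) :=
      (Finset.univ.filter fun r : Fin (m+1) → ZMod p => eval r f = 0) with hZfull
    have hZcard : Zfull.card ≤ D * p ^ m := by
      have h1 := sz' (m+1) (Finset.univ : Finset (ZMod p)) D f hf hdeg
      rw [Fintype.piFinset_univ, Finset.card_univ, ZMod.card] at h1
      have h2 : Zfull.card * p ≤ (D * p ^ m) * p := by
        calc Zfull.card * p ≤ D * p ^ (m + 1) := h1
          _ = (D * p ^ m) * p := by ring
      exact Nat.le_of_mul_le_mul_right h2 hp.pos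
    have hAcard : A.card ≤ Zfull.card * M.toNat ^ (m + 1) := by
      have hmaps : ∀ x ∈ A, φ x ∈ A.image φ := fun x hx => Finset.mem_image_of_mem φ hx
      rw [Finset.card_eq_sum_card_fiberwise hmaps]
      have himg : A.image φ ⊆ Zfull := by
        intro r hr
        rw [Finset.mem_image] at hr
        obtain ⟨x, hx, rfl⟩ := hr
        rw [hZfull, Finset.mem_filter]
        exact ⟨Finset.mem_univ _, hmemA x hx⟩
      calc ∑ r ∈ A.image φ, (A.filter fun x => φ x = r).card
          ≤ ∑ r ∈ A.image φ, M.toNat ^ (m + 1) := by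
            apply Finset.sum_le_sum
            intro r _
            calc (A.filter fun x => φ x = r).card
                ≤ (Fintype.piFinset fun i : Fin (m+1) =>
                    box.filter (fun a : ℤ => ((a : ZMod p) = r i))).card := by
                  apply Finset.card_le_card
                  intro x hx
                  rw [Finset.mem_filter] at hx
                  rw [Fintype.mem_piFinset]
                  intro i
                  rw [Finset.mem_filter]
                  refine ⟨?_, ?_⟩
                  · rw [hboxdef, Finset.mem_Icc]; exact hboxA x hx.1 i
                  · exact congrFun hx.2 i
              _ = ∏ i : Fin (m+1), (box.filter (fun a : ℤ => ((a : ZMod p) = r i))).card :=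
                  Fintype.card_piFinset _
              _ ≤ ∏ _i : Fin (m+1), M.toNat :=
                  Finset.prod_le_prod' fun i _ => hfiber (r i)
              _ = M.toNat ^ (m + 1) := by simp [Finset.prod_const]
        _ = (A.image φ).card * M.toNat ^ (m + 1) := by
            rw [Finset.sum_const, smul_eq_mul]
        _ ≤ Zfull.card * M.toNat ^ (m + 1) :=
            Nat.mul_le_mul_right _ (Finset.card_le_card himg)
    -- now real arithmetic
    have hMeq : (M.toNat : ℝ) = (M : ℝ) := by exact_mod_cast Int.toNat_of_nonneg hM0
    have hMreal : (M.toNat : ℝ) ≤ 2 * T / p := by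
      rw [hMeq]
      have hdivle : (p : ℤ) * ((N - 1) / p) ≤ N - 1 := by
        have h1 := Int.mul_ediv_add_emod (N - 1) p
        have h2 := Int.emod_nonneg (N - 1) (show ((p:ℕ):ℤ) ≠ 0 by omega)
        omega
      have hcast : ((((N - 1) / p : ℤ)) : ℝ) ≤ ((N : ℝ) - 1) / p := by
        rw [le_div_iff₀ hp0]
        have h3 : ((p : ℤ) : ℝ) * (((N - 1) / p : ℤ) : ℝ) ≤ ((N - 1 : ℤ) : ℝ) := by
          exact_mod_cast hdivle
        push_cast at h3 ⊢
        linarith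
      have hM : (M : ℝ) ≤ ((N : ℝ) - 1) / p + 1 := by
        rw [hMdef]; push_cast; push_cast at hcast; linarith
      have h1p : 1 ≤ T / p := (one_le_div hp0).mpr hcase
      have hstep : ((N : ℝ) - 1) / p ≤ T / p := by gcongr <;> linarith
      calc (M : ℝ) ≤ ((N : ℝ) - 1) / p + 1 := hM
        _ ≤ T / p + T / p := add_le_add hstep h1p
        _ = 2 * T / p := by ring
    have hfinal : (A.card : ℝ) ≤ (D : ℝ) * (p:ℝ) ^ m * ((M.toNat : ℝ)) ^ (m + 1) := by
      have h1 : A.card ≤ (D * p ^ m) * M.toNat ^ (m + 1) :=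
        le_trans hAcard (Nat.mul_le_mul_right _ hZcard)
      exact_mod_cast h1
    have hkey : (D : ℝ) * (p:ℝ) ^ m * (2 * T / p) ^ (m + 1) =
        ((D : ℝ) * 2 ^ (m + 1)) * (T ^ (m + 1) * (p : ℝ)⁻¹) := by
      field_simp
      have hp' : (p:ℝ) ≠ 0 := ne_of_gt hp0
      rw [div_pow, pow_succ (p:ℝ) m]
      field_simp
      ring
    have hmid : (A.card : ℝ) ≤ ((D : ℝ) * 2 ^ (m + 1)) * (T ^ (m + 1) * (p : ℝ)⁻¹) := by
      rw [← hkey]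
      refine le_trans hfinal ?_
      have h2 : ((M.toNat : ℝ)) ^ (m+1) ≤ (2 * T / p) ^ (m+1) :=
        pow_le_pow_left₀ (by positivity) hMreal _
      have h3 : (0:ℝ) ≤ (D : ℝ) * (p:ℝ) ^ m := by positivity
      exact mul_le_mul_of_nonneg_left h2 h3
    have hterm : 0 ≤ ((D : ℝ) * 2 ^ (m + 1)) * T ^ m := by positivity
    nlinarith [hmid, hterm]
  · -- p large: injective reduction mod p
    push_neg at hcase
    have hNp : N < (p : ℤ) := by
      have : (N : ℝ) < p := lt_of_le_of_lt hNT hcase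
      exact_mod_cast this
    have hinj : ∀ a ∈ box, ∀ b ∈ box, ((a : ZMod p)) = ((b : ZMod p)) → a = b := by
      intro a ha b hb hab
      rw [hboxdef, Finset.mem_Icc] at ha hb
      have hdvd : (p : ℤ) ∣ b - a := Int.ModEq.dvd ((ZMod.intCast_eq_intCast_iff _ _ _).mp hab)
      have hz : b - a = 0 := Int.eq_zero_of_abs_lt_dvd hdvd (by rw [abs_lt]; omega)
      omega
    set S' : Finset (ZMod p) := box.image (fun a : ℤ => (a : ZMod p)) with hS'
    have hcardim : A.card = (A.image φ).card := by
      rw [Finset.card_image_of_injOn]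
      intro x hx y hy hxy
      funext i
      have hxi : x i ∈ box := by rw [hboxdef, Finset.mem_Icc]; exact hboxA x hx i
      have hyi : y i ∈ box := by rw [hboxdef, Finset.mem_Icc]; exact hboxA y hy i
      exact hinj _ hxi _ hyi (congrFun hxy i)
    set Z' : Finset (Fin (m+1) → ZMod p) :=
      (Fintype.piFinset fun _ : Fin (m+1) => S').filter (fun r => eval r f = 0) with hZ'
    have himg : A.image φ ⊆ Z' := by
      intro r hr
      rw [Finset.mem_image] at hr
      obtain ⟨x, hx, rfl⟩ := hr
      rw [hZ', Finset.mem_filter]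
      constructor
      · rw [Fintype.mem_piFinset]
        intro i
        rw [hS']
        apply Finset.mem_image_of_mem
        rw [hboxdef, Finset.mem_Icc]; exact hboxA x hx i
      · exact hmemA x hx
    have hS'pos : 0 < S'.card := by
      rw [hS']
      apply Finset.card_pos.mpr
      refine ⟨((1:ℤ) : ZMod p), Finset.mem_image_of_mem _ ?_⟩
      rw [hboxdef, Finset.mem_Icc]; omega
    have hZ'card : Z'.card ≤ D * S'.card ^ m := by
      have h1 := sz' (m+1) S' D f hf hdeg
      have h2 : Z'.card * S'.card ≤ (D * S'.card ^ m) * S'.card := by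
        calc Z'.card * S'.card ≤ D * S'.card ^ (m + 1) := h1
          _ = (D * S'.card ^ m) * S'.card := by ring
      exact Nat.le_of_mul_le_mul_right h2 hS'pos
    have hS'le : S'.card ≤ N.toNat := by
      rw [hS']
      refine le_trans (Finset.card_image_le) ?_
      rw [hboxdef, Int.card_Icc]
      omega
    have hAle : A.card ≤ D * N.toNat ^ m := by
      calc A.card = (A.image φ).card := hcardim
        _ ≤ Z'.card := Finset.card_le_card himg
        _ ≤ D * S'.card ^ m := hZ'card
        _ ≤ D * N.toNat ^ m := Nat.mul_le_mul_left _ (Nat.pow_le_pow_left hS'le m)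
    have hNTr : (N.toNat : ℝ) ≤ T := by
      have : ((N.toNat : ℤ) : ℝ) = (N : ℝ) := by
        rw [Int.toNat_of_nonneg (by omega)]
      push_cast at this
      linarith
    have hAr : (A.card : ℝ) ≤ (D : ℝ) * T ^ m := by
      have h1 : (A.card : ℝ) ≤ (D : ℝ) * ((N.toNat : ℝ)) ^ m := by exact_mod_cast hAle
      refine le_trans h1 ?_
      have := pow_le_pow_left₀ (by positivity : (0:ℝ) ≤ (N.toNat : ℝ)) hNTr m
      nlinarith
    have h2m : (1:ℝ) ≤ 2 ^ (m+1) := one_le_pow₀ (by norm_num)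
    have hDle : (D:ℝ) * T ^ m ≤ ((D : ℝ) * 2 ^ (m + 1)) * T ^ m := by
      have : (0:ℝ) ≤ (D:ℝ) * T ^ m := by positivity
      nlinarith
    have hpos : 0 ≤ ((D : ℝ) * 2 ^ (m + 1)) * (T ^ (m+1) * (p:ℝ)⁻¹) := by positivity
    nlinarith [hAr, hDle, hpos]
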